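/- Let p be a prime number and let s ∈ ℂ with Re(s) > -1. Then ∫_{ℤ_p × ℤ_p} |x - y|_p^s dμ(x)dμ(y) = (1 - p^{-1})/(1 - p^{-1-s}). -/

import Mathlib

open MeasureTheory Complex Set ENNReal
namespace PadicZeta


lemma measurable_cpow_const (s : ℂ) : Measurable (fun x : ℂ => x ^ s) := by
  have h : (fun x : ℂ => x ^ s)
      = fun x => if x = 0 then (if s = 0 then 1 else 0) else Complex.exp (Complex.log x * s) := by
    funext x; rw [Complex.cpow_def]
  rw [h]
  exact Measurable.ite (measurableSet_eq) measurable_const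
    ((Measurable.clog measurable_id).mul_const s).cexp

lemma ofReal_pow_cpow {r : ℝ} (hr : 0 ≤ r) (n : ℕ) (s : ℂ) :
    (((r : ℂ)) ^ n) ^ s = ((r : ℂ) ^ s) ^ n := by
  rw [← Complex.cpow_nat_mul' (x := (r:ℂ)) (n := n)
      (by rw [Complex.arg_ofReal_of_nonneg hr]; simpa using Real.pi_pos)
      (by rw [Complex.arg_ofReal_of_nonneg hr]; simp [Real.pi_nonneg]), Complex.cpow_nat_mul]

variable {p : ℕ} [hp : Fact p.Prime]

lemma one_lt_p : (1:ℝ) < p := by exact_mod_cast hp.out.one_lt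

lemma p_pos : (0:ℝ) < p := lt_trans one_pos one_lt_p

/-- closed ball of radius p^{-n} -/
def B (p : ℕ) [Fact p.Prime] (n : ℕ) : Set ℚ_[p] := {x | ‖x‖ ≤ (p:ℝ) ^ (-(n:ℤ))}

omit hp in
lemma zpow_neg_nat (n : ℕ) : (p:ℝ) ^ (-(n:ℤ)) = ((p:ℝ)⁻¹) ^ n := by
  rw [zpow_neg, zpow_natCast, inv_pow]

lemma exists_approx (x : ℚ_[p]) (hx : ‖x‖ ≤ 1) :
    ∃ k : ℕ, k < p ∧ ‖x - (k : ℚ_[p])‖ ≤ (p:ℝ)⁻¹ := by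
  set z : ℤ_[p] := ⟨x, hx⟩ with hz
  refine ⟨z.appr 1, by simpa using z.appr_lt 1, ?_⟩
  have h := (PadicInt.norm_le_pow_iff_mem_span_pow (z - (z.appr 1 : ℤ_[p])) 1).mpr (z.appr_spec 1)
  have hc : ((z - (z.appr 1 : ℤ_[p]) : ℤ_[p]) : ℚ_[p]) = x - (z.appr 1 : ℚ_[p]) := by
    push_cast [hz]
    rfl
  rw [PadicInt.norm_def, hc] at h
  simpa [zpow_neg] using h

def C (p : ℕ) [Fact p.Prime] (n k : ℕ) : Set ℚ_[p] :=
  {x | ‖x - (k : ℚ_[p]) * (p : ℚ_[p]) ^ n‖ ≤ (p:ℝ) ^ (-((n+1:ℕ):ℤ))}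

lemma mem_C_iff {n k : ℕ} {x : ℚ_[p]} :
    x ∈ C p n k ↔ ‖x - (k : ℚ_[p]) * (p : ℚ_[p]) ^ n‖ ≤ (p:ℝ) ^ (-(n:ℤ) - 1) := by
  have : (-((n+1:ℕ):ℤ)) = -(n:ℤ) - 1 := by push_cast; ring
  simp only [C, mem_setOf_eq, this]

lemma B_eq_iUnion_C (n : ℕ) : B p n = ⋃ k : Fin p, C p n (k : ℕ) := by
  have hpn : ((p : ℚ_[p]) ^ n) ≠ 0 := pow_ne_zero _ (by exact_mod_cast hp.out.ne_zero)
  have hnorm : ‖(p : ℚ_[p]) ^ n‖ = (p:ℝ) ^ (-(n:ℤ)) := Padic.norm_p_pow n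
  ext x
  simp only [B, mem_setOf_eq, mem_iUnion]
  constructor
  · intro hx
    set u : ℚ_[p] := x / (p : ℚ_[p]) ^ n with hu
    have hun : ‖u‖ ≤ 1 := by
      rw [hu, norm_div, hnorm, div_le_one (zpow_pos p_pos _)]
      exact hx
    obtain ⟨k, hk, hk2⟩ := exists_approx u hun
    refine ⟨⟨k, hk⟩, ?_⟩
    rw [mem_C_iff]
    have hxu : x = u * (p : ℚ_[p]) ^ n := by rw [hu, div_mul_cancel₀ _ hpn]
    have : x - (k : ℚ_[p]) * (p : ℚ_[p]) ^ n = (u - k) * (p : ℚ_[p]) ^ n := by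
      rw [hxu]; ring
    rw [this, norm_mul, hnorm]
    calc ‖u - (k:ℚ_[p])‖ * (p:ℝ) ^ (-(n:ℤ)) ≤ (p:ℝ)⁻¹ * (p:ℝ) ^ (-(n:ℤ)) := by
          apply mul_le_mul_of_nonneg_right hk2 (by positivity)
      _ = (p:ℝ) ^ (-(n:ℤ) - 1) := by
          rw [sub_eq_add_neg, zpow_add₀ (ne_of_gt p_pos), zpow_neg_one, mul_comm]
  · rintro ⟨k, hk⟩
    rw [mem_C_iff] at hk
    have h1 : ‖x - (k : ℚ_[p]) * (p : ℚ_[p]) ^ n‖ ≤ (p:ℝ) ^ (-(n:ℤ)) := by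
      refine hk.trans (zpow_le_zpow_right₀ (le_of_lt one_lt_p) (by omega))
    have h2 : ‖(k : ℚ_[p]) * (p : ℚ_[p]) ^ n‖ ≤ (p:ℝ) ^ (-(n:ℤ)) := by
      rw [norm_mul, hnorm]
      calc ‖((k:ℕ) : ℚ_[p])‖ * (p:ℝ) ^ (-(n:ℤ)) ≤ 1 * (p:ℝ) ^ (-(n:ℤ)) := by
            apply mul_le_mul_of_nonneg_right _ (by positivity)
            exact_mod_cast Padic.norm_int_le_one ((k:ℤ))
        _ = (p:ℝ) ^ (-(n:ℤ)) := one_mul _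
    calc ‖x‖ = ‖(x - (k : ℚ_[p]) * (p : ℚ_[p]) ^ n) + (k : ℚ_[p]) * (p : ℚ_[p]) ^ n‖ := by
          ring_nf
      _ ≤ max ‖x - (k : ℚ_[p]) * (p : ℚ_[p]) ^ n‖ ‖(k : ℚ_[p]) * (p : ℚ_[p]) ^ n‖ :=
          Padic.nonarchimedean _ _
      _ ≤ (p:ℝ) ^ (-(n:ℤ)) := max_le h1 h2

lemma C_disjoint (n : ℕ) : Pairwise (Function.onFun Disjoint (fun k : Fin p => C p n (k : ℕ))) := by
  intro k l hkl
  rw [Function.onFun, Set.disjoint_left]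
  intro x hxk hxl
  rw [mem_C_iff] at hxk hxl
  have hnorm : ‖(p : ℚ_[p]) ^ n‖ = (p:ℝ) ^ (-(n:ℤ)) := Padic.norm_p_pow n
  have hd : ((k:ℕ) : ℚ_[p]) * (p : ℚ_[p]) ^ n - ((l:ℕ) : ℚ_[p]) * (p : ℚ_[p]) ^ n
      = (x - (l:ℕ) * (p : ℚ_[p]) ^ n) - (x - (k:ℕ) * (p : ℚ_[p]) ^ n) := by ring
  have hle : ‖((((k:ℕ):ℤ) - ((l:ℕ):ℤ) : ℤ) : ℚ_[p])‖ * (p:ℝ) ^ (-(n:ℤ)) ≤ (p:ℝ) ^ (-(n:ℤ) - 1) := by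
    have : ‖((((k:ℕ):ℤ) - ((l:ℕ):ℤ) : ℤ) : ℚ_[p]) * (p : ℚ_[p]) ^ n‖ ≤ (p:ℝ) ^ (-(n:ℤ) - 1) := by
      have heq : ((((k:ℕ):ℤ) - ((l:ℕ):ℤ) : ℤ) : ℚ_[p]) * (p : ℚ_[p]) ^ n
          = (x - (l:ℕ) * (p : ℚ_[p]) ^ n) - (x - (k:ℕ) * (p : ℚ_[p]) ^ n) := by
        push_cast; ring
      rw [heq, sub_eq_add_neg]
      refine le_trans (Padic.nonarchimedean _ _) (max_le hxl (by rwa [norm_neg]))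
    rwa [norm_mul, hnorm] at this
  -- derive ‖k - l‖ ≤ p⁻¹ < 1
  have hlt : ‖((((k:ℕ):ℤ) - ((l:ℕ):ℤ) : ℤ) : ℚ_[p])‖ < 1 := by
    have hppos : (0:ℝ) < (p:ℝ) ^ (-(n:ℤ)) := zpow_pos p_pos _
    calc ‖((((k:ℕ):ℤ) - ((l:ℕ):ℤ) : ℤ) : ℚ_[p])‖
        ≤ (p:ℝ) ^ (-(n:ℤ) - 1) / (p:ℝ) ^ (-(n:ℤ)) := by
          rw [le_div_iff₀ hppos]; exact hle
      _ = (p:ℝ)⁻¹ := by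
          rw [← zpow_sub₀ (ne_of_gt p_pos)]; ring_nf; exact zpow_neg_one _
      _ < 1 := by
          rw [inv_lt_one_iff₀]; right; exact one_lt_p
  rw [Padic.norm_intCast_lt_one_iff] at hlt
  have habs : |(((k:ℕ):ℤ) - ((l:ℕ):ℤ))| < p := by
    have h1 : ((k:ℕ):ℤ) < p := by exact_mod_cast k.isLt
    have h2 : ((l:ℕ):ℤ) < p := by exact_mod_cast l.isLt
    rw [abs_lt]; omega
  have := Int.eq_zero_of_abs_lt_dvd hlt habs
  apply hkl
  have : ((k:ℕ):ℤ) = ((l:ℕ):ℤ) := by omega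
  exact Fin.ext (by exact_mod_cast this)

variable [MeasurableSpace ℚ_[p]] [BorelSpace ℚ_[p]]

lemma measurableSet_B (n : ℕ) : MeasurableSet (B p n) :=
  (isClosed_le continuous_norm continuous_const).measurableSet

lemma measurableSet_C (n k : ℕ) : MeasurableSet (C p n k) :=
  (isClosed_le ((continuous_id.sub continuous_const).norm) continuous_const).measurableSet

variable (μ : Measure ℚ_[p]) [μ.IsAddHaarMeasure]

lemma measure_C (n k : ℕ) : μ (C p n k) = μ (B p (n+1)) := by
  have h : C p n k = (fun x => x + (-((k : ℚ_[p]) * (p : ℚ_[p]) ^ n))) ⁻¹' (B p (n+1)) := by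
    ext x
    simp only [C, B, mem_setOf_eq, mem_preimage, ← sub_eq_add_neg]
  rw [h, measure_preimage_add_right]

lemma pnnz : (p : ℝ≥0∞) ≠ 0 := by exact_mod_cast hp.out.ne_zero
lemma pnnt : (p : ℝ≥0∞) ≠ ⊤ := ENNReal.natCast_ne_top p

lemma measure_B (hμ : μ {x : ℚ_[p] | ‖x‖ ≤ 1} = 1) (n : ℕ) :
    μ (B p n) = (p : ℝ≥0∞)⁻¹ ^ n := by
  induction n with
  | zero =>
    have : B p 0 = {x : ℚ_[p] | ‖x‖ ≤ 1} := by simp [B]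
    rw [this, hμ, pow_zero]
  | succ n ih =>
    have hsum : μ (B p n) = (p : ℝ≥0∞) * μ (B p (n+1)) := by
      rw [B_eq_iUnion_C, measure_iUnion (C_disjoint n) (fun k => measurableSet_C n _)]
      simp only [measure_C]
      rw [tsum_fintype]
      simp [Finset.card_univ, mul_comm]
    have : (p : ℝ≥0∞)⁻¹ * μ (B p n) = μ (B p (n+1)) := by
      rw [hsum, ← mul_assoc, ENNReal.inv_mul_cancel pnnz pnnt, one_mul]
    rw [← this, ih, pow_succ, mul_comm]

lemma measure_B_ne_top (hμ : μ {x : ℚ_[p] | ‖x‖ ≤ 1} = 1) (n : ℕ) : μ (B p n) ≠ ⊤ := by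
  rw [measure_B μ hμ]
  exact ENNReal.pow_ne_top (ENNReal.inv_ne_top.mpr pnnz)

/-- the shell of norm exactly p^{-n} -/
def A (p : ℕ) [Fact p.Prime] (n : ℕ) : Set ℚ_[p] := B p n \ B p (n+1)

lemma measurableSet_A (n : ℕ) : MeasurableSet (A p n) :=
  (measurableSet_B n).diff (measurableSet_B (n+1))

lemma B_succ_subset (n : ℕ) : B p (n+1) ⊆ B p n := by
  intro x hx
  exact le_trans hx (zpow_le_zpow_right₀ (le_of_lt one_lt_p) (by omega))

lemma measure_A (hμ : μ {x : ℚ_[p] | ‖x‖ ≤ 1} = 1) (n : ℕ) :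
    μ (A p n) = (p : ℝ≥0∞)⁻¹ ^ n - (p : ℝ≥0∞)⁻¹ ^ (n+1) := by
  rw [A, measure_diff (B_succ_subset n) (measurableSet_B (n+1)).nullMeasurableSet
    (measure_B_ne_top μ hμ (n+1)), measure_B μ hμ, measure_B μ hμ]

lemma measure_A_toReal (hμ : μ {x : ℚ_[p] | ‖x‖ ≤ 1} = 1) (n : ℕ) :
    (μ (A p n)).toReal = ((p:ℝ)⁻¹) ^ n * (1 - (p:ℝ)⁻¹) := by
  rw [measure_A μ hμ, ENNReal.toReal_sub_of_le (pow_le_pow_of_le_one (by positivity)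
    (ENNReal.inv_le_one.mpr (by exact_mod_cast hp.out.one_le)) (by omega))
    (ENNReal.pow_ne_top (ENNReal.inv_ne_top.mpr pnnz))]
  have h : ∀ m : ℕ, ((p : ℝ≥0∞)⁻¹ ^ m).toReal = ((p:ℝ)⁻¹) ^ m := by
    intro m
    rw [ENNReal.toReal_pow, ENNReal.toReal_inv]
    norm_num
  rw [h, h, pow_succ]
  ring

lemma measure_singleton_zero (hμ : μ {x : ℚ_[p] | ‖x‖ ≤ 1} = 1) : μ {(0:ℚ_[p])} = 0 := by
  have hb : ∀ n : ℕ, μ {(0:ℚ_[p])} ≤ (p : ℝ≥0∞)⁻¹ ^ n := by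
    intro n
    rw [← measure_B μ hμ n]
    apply measure_mono
    intro x hx
    simp only [mem_singleton_iff] at hx
    simp [B, hx, le_of_lt (zpow_pos p_pos _)]
  have htend : Filter.Tendsto (fun n : ℕ => (p : ℝ≥0∞)⁻¹ ^ n) Filter.atTop (nhds 0) :=
    ENNReal.tendsto_pow_atTop_nhds_zero_of_lt_one
      (ENNReal.inv_lt_one.mpr (by exact_mod_cast hp.out.one_lt))
  have := ge_of_tendsto htend (Filter.Eventually.of_forall hb)
  simpa using this

lemma zpow_le_zpow_iff_p {a b : ℤ} : (p:ℝ) ^ a ≤ (p:ℝ) ^ b ↔ a ≤ b :=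
  zpow_le_zpow_iff_right₀ one_lt_p

lemma mem_A_ne_zero {n : ℕ} {x : ℚ_[p]} (hx : x ∈ A p n) : x ≠ 0 := by
  rintro rfl
  exact hx.2 (by simp [B, le_of_lt (zpow_pos p_pos _)])

lemma norm_eq_of_mem_A {n : ℕ} {x : ℚ_[p]} (hx : x ∈ A p n) : ‖x‖ = ((p:ℝ)⁻¹) ^ n := by
  obtain ⟨h1, h2⟩ := hx
  have hx0 : x ≠ 0 := mem_A_ne_zero ⟨h1, h2⟩
  have hval : ‖x‖ = (p:ℝ) ^ (-x.valuation) := Padic.norm_eq_zpow_neg_valuation hx0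
  have h1' : -x.valuation ≤ -(n:ℤ) := by
    rw [← zpow_le_zpow_iff_p (p := p), ← hval]; exact h1
  have h2' : ¬ (-x.valuation ≤ -((n+1:ℕ):ℤ)) := by
    rw [← zpow_le_zpow_iff_p (p := p), ← hval]; exact h2
  have hveq : -x.valuation = -(n:ℤ) := by push_cast at h2'; omega
  rw [hval, hveq, zpow_neg_nat]

lemma A_disjoint : Pairwise (Function.onFun Disjoint (A p)) := by
  intro k l hkl
  rw [Function.onFun, Set.disjoint_left]
  intro x hxk hxl
  have h1 := norm_eq_of_mem_A hxk
  have h2 := norm_eq_of_mem_A hxl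
  rw [h1] at h2
  have h3 : (p:ℝ) ^ (-(k:ℤ)) = (p:ℝ) ^ (-(l:ℤ)) := by
    rw [zpow_neg_nat, zpow_neg_nat, h2]
  apply hkl
  have h5 : -(k:ℤ) ≤ -(l:ℤ) := zpow_le_zpow_iff_p.mp (le_of_eq h3)
  have h6 : -(l:ℤ) ≤ -(k:ℤ) := zpow_le_zpow_iff_p.mp (le_of_eq h3.symm)
  omega

lemma iUnion_A : (⋃ n, A p n) = {x : ℚ_[p] | ‖x‖ ≤ 1} \ {0} := by
  ext x
  simp only [mem_iUnion, mem_diff, mem_setOf_eq, mem_singleton_iff]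
  constructor
  · rintro ⟨n, hn⟩
    have h1 := norm_eq_of_mem_A hn
    refine ⟨?_, mem_A_ne_zero hn⟩
    rw [h1]
    exact pow_le_one₀ (by positivity) (inv_le_one_of_one_le₀ (le_of_lt one_lt_p))
  · rintro ⟨hx1, hx0⟩
    have hv : 0 ≤ x.valuation := (Padic.norm_le_one_iff_val_nonneg x).mp hx1
    refine ⟨x.valuation.toNat, ?_, ?_⟩
    · show ‖x‖ ≤ (p:ℝ) ^ (-(x.valuation.toNat:ℤ))
      rw [Padic.norm_eq_zpow_neg_valuation hx0, Int.toNat_of_nonneg hv]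
    · show ¬ ‖x‖ ≤ (p:ℝ) ^ (-((x.valuation.toNat + 1 : ℕ):ℤ))
      rw [Padic.norm_eq_zpow_neg_valuation hx0, zpow_le_zpow_iff_p, Int.toNat_of_nonneg hv |>.symm]
      push_cast
      omega



omit hp in
lemma real_pow_rpow {a : ℝ} (ha : 0 ≤ a) (n : ℕ) (r : ℝ) :
    (a ^ n) ^ r = (a ^ r) ^ n := by
  rw [← Real.rpow_natCast a n, ← Real.rpow_natCast (a ^ r) n, ← Real.rpow_mul ha,
    ← Real.rpow_mul ha, mul_comm]

lemma hr1 {s : ℂ} (hs : -1 < s.re) : (p:ℝ)⁻¹ ^ s.re * (p:ℝ)⁻¹ < 1 := by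
  have h1 : (p:ℝ)⁻¹ ^ s.re = (p:ℝ) ^ (-s.re) := by
    rw [← Real.rpow_neg_one (p:ℝ), ← Real.rpow_mul (le_of_lt p_pos)]
    ring_nf
  have h2 : (p:ℝ)⁻¹ = (p:ℝ) ^ (-1 : ℝ) := (Real.rpow_neg_one (p:ℝ)).symm
  rw [h1, h2, ← Real.rpow_add p_pos]
  exact Real.rpow_lt_one_of_one_lt_of_neg one_lt_p (by linarith)

lemma f_measurable (s : ℂ) : Measurable (fun x : ℚ_[p] => ((‖x‖:ℝ) : ℂ) ^ s) :=
  (measurable_cpow_const s).comp (Complex.measurable_ofReal.comp measurable_norm)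

lemma f_norm_on_A {s : ℂ} {n : ℕ} {x : ℚ_[p]} (hx : x ∈ A p n) :
    ((‖x‖:ℝ) : ℂ) ^ s = ((((p:ℝ)⁻¹ : ℝ) : ℂ) ^ s) ^ n := by
  rw [norm_eq_of_mem_A hx, Complex.ofReal_pow]
  exact ofReal_pow_cpow (by positivity) n s

lemma f_enorm_on_A {s : ℂ} {n : ℕ} {x : ℚ_[p]} (hx : x ∈ A p n) :
    (‖((‖x‖:ℝ) : ℂ) ^ s‖₊ : ℝ≥0∞) = ENNReal.ofReal (((p:ℝ)⁻¹ ^ s.re) ^ n) := by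
  rw [← enorm_eq_nnnorm, ← ofReal_norm, norm_eq_of_mem_A hx]
  congr 1
  rw [Complex.norm_cpow_eq_rpow_re_of_pos (pow_pos (inv_pos.mpr p_pos) n)]
  exact real_pow_rpow (by positivity) n s.re

lemma key_single (hμ : μ {x : ℚ_[p] | ‖x‖ ≤ 1} = 1) (s : ℂ) (hs : -1 < s.re) :
    IntegrableOn (fun x : ℚ_[p] => ((‖x‖:ℝ) : ℂ) ^ s) {x : ℚ_[p] | ‖x‖ ≤ 1} μ ∧
    ∫ x in {x : ℚ_[p] | ‖x‖ ≤ 1}, ((‖x‖:ℝ) : ℂ) ^ s ∂μ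
      = (1 - (p : ℂ)⁻¹) / (1 - (p : ℂ) ^ (-1 - s)) := by
  set f : ℚ_[p] → ℂ := fun x => ((‖x‖:ℝ) : ℂ) ^ s with hf
  -- restriction to Z equals restriction to the union of shells
  have hres : μ.restrict {x : ℚ_[p] | ‖x‖ ≤ 1} = μ.restrict (⋃ n, A p n) := by
    rw [iUnion_A]
    refine (Measure.restrict_congr_set ?_).symm
    rw [diff_ae_eq_self]
    exact measure_mono_null inter_subset_right (measure_singleton_zero μ hμ)
  -- integrability
  have hsubB : ∀ n, A p n ⊆ B p n := fun n => diff_subset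
  have hμA_le : ∀ n, μ (A p n) ≤ (p:ℝ≥0∞)⁻¹ ^ n := fun n =>
    le_trans (measure_mono (hsubB n)) (le_of_eq (measure_B μ hμ n))
  have hterm : ∀ n : ℕ, ∫⁻ x in A p n, ↑‖f x‖₊ ∂μ
      = ENNReal.ofReal (((p:ℝ)⁻¹ ^ s.re) ^ n) * μ (A p n) := by
    intro n
    rw [setLIntegral_congr_fun (measurableSet_A n)
      (fun x hx => f_enorm_on_A hx), setLIntegral_const]
  set r : ℝ≥0∞ := ENNReal.ofReal ((p:ℝ)⁻¹ ^ s.re) * (p:ℝ≥0∞)⁻¹ with hrdef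
  have hr_lt : r < 1 := by
    have h1 : (p:ℝ≥0∞)⁻¹ = ENNReal.ofReal ((p:ℝ)⁻¹) := by
      rw [ENNReal.ofReal_inv_of_pos p_pos, ENNReal.ofReal_natCast]
    rw [hrdef, h1, ← ENNReal.ofReal_mul (by positivity)]
    exact ENNReal.ofReal_lt_one.mpr (hr1 hs)
  have hbound : ∀ n : ℕ, ∫⁻ x in A p n, ↑‖f x‖₊ ∂μ ≤ r ^ n := by
    intro n
    rw [hterm n, hrdef, mul_pow, ← ENNReal.ofReal_pow (by positivity)]
    exact mul_le_mul_right (hμA_le n) _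
  have hfin : ∫⁻ x in ⋃ n, A p n, ↑‖f x‖₊ ∂μ < ⊤ := by
    rw [lintegral_iUnion measurableSet_A A_disjoint]
    calc ∑' n : ℕ, ∫⁻ x in A p n, ↑‖f x‖₊ ∂μ ≤ ∑' n : ℕ, r ^ n :=
          ENNReal.tsum_le_tsum hbound
      _ = (1 - r)⁻¹ := ENNReal.tsum_geometric r
      _ < ⊤ := ENNReal.inv_lt_top.mpr (tsub_pos_of_lt hr_lt)
  have hint : IntegrableOn f {x : ℚ_[p] | ‖x‖ ≤ 1} μ := by
    refine ⟨(f_measurable s).aestronglyMeasurable, ?_⟩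
    rw [HasFiniteIntegral, hres]
    exact hfin
  refine ⟨hint, ?_⟩
  -- compute the integral
  have hintU : IntegrableOn f (⋃ n, A p n) μ := by
    rw [IntegrableOn, ← hres]; exact hint
  have h1 : ∫ x in {x : ℚ_[p] | ‖x‖ ≤ 1}, f x ∂μ = ∫ x in ⋃ n, A p n, f x ∂μ := by
    rw [hres]
  rw [h1, integral_iUnion measurableSet_A A_disjoint hintU]
  set q : ℂ := (((p:ℝ)⁻¹ : ℝ) : ℂ) ^ s with hq
  have hterm2 : ∀ n : ℕ, ∫ x in A p n, f x ∂μ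
      = (1 - (p:ℂ)⁻¹) * ((p:ℂ)⁻¹ * q) ^ n := by
    intro n
    rw [setIntegral_congr_fun (measurableSet_A n) (fun x hx => f_norm_on_A hx),
      setIntegral_const, measureReal_def, measure_A_toReal μ hμ n, Complex.real_smul]
    rw [hq]
    push_cast
    rw [mul_pow]
    ring
  simp_rw [hterm2]
  have hwlt : ‖(p:ℂ)⁻¹ * q‖ < 1 := by
    rw [norm_mul, hq, norm_inv, Complex.norm_natCast,
      Complex.norm_cpow_eq_rpow_re_of_pos (inv_pos.mpr p_pos)]
    rw [mul_comm]
    exact hr1 hs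
  rw [tsum_mul_left, tsum_geometric_of_norm_lt_one hwlt]
  have hw_eq : (p:ℂ) ^ (-1 - s) = (p:ℂ)⁻¹ * q := by
    have hp0 : (p:ℂ) ≠ 0 := by exact_mod_cast hp.out.ne_zero
    rw [sub_eq_add_neg, Complex.cpow_add _ _ hp0, Complex.cpow_neg_one, Complex.cpow_neg]
    congr 1
    rw [hq]
    push_cast
    rw [Complex.inv_cpow]
    rw [Complex.natCast_arg]
    exact Ne.symm Real.pi_ne_zero
  rw [hw_eq, div_eq_mul_inv]


lemma preimage_shift {x : ℚ_[p]} (hx : ‖x‖ ≤ 1) :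
    (fun y : ℚ_[p] => y + (-x)) ⁻¹' {y : ℚ_[p] | ‖y‖ ≤ 1} = {y : ℚ_[p] | ‖y‖ ≤ 1} := by
  ext y
  simp only [mem_preimage, mem_setOf_eq]
  constructor
  · intro h
    have : ‖y‖ = ‖(y + (-x)) + x‖ := by ring_nf
    rw [this]
    exact le_trans (Padic.nonarchimedean _ _) (max_le h hx)
  · intro h
    refine le_trans (Padic.nonarchimedean _ _) (max_le h (by rwa [norm_neg]))


end PadicZeta

open PadicZeta


/-- Example-3: the integral of `|x-y|_p^s` over `ℤ_p × ℤ_p`. -/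
theorem padic_zeta_integral_diff_Zp (p : ℕ) [Fact p.Prime]
    [MeasurableSpace ℚ_[p]] [BorelSpace ℚ_[p]]
    (μ : Measure ℚ_[p]) [μ.IsAddHaarMeasure]
    (hμ : μ {x : ℚ_[p] | ‖x‖ ≤ 1} = 1)
    (s : ℂ) (hs : -1 < s.re) :
    ∫ z in ({x : ℚ_[p] | ‖x‖ ≤ 1} ×ˢ {x : ℚ_[p] | ‖x‖ ≤ 1}),
        (‖z.1 - z.2‖ : ℂ) ^ s ∂(μ.prod μ)
      = (1 - (p : ℂ)⁻¹) / (1 - (p : ℂ) ^ (-1 - s)) := by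
  set Z : Set ℚ_[p] := {x : ℚ_[p] | ‖x‖ ≤ 1} with hZ
  set f : ℚ_[p] → ℂ := fun x => ((‖x‖:ℝ) : ℂ) ^ s with hf
  obtain ⟨hint, hval⟩ := key_single μ hμ s hs
  have hZm : MeasurableSet Z := (isClosed_le continuous_norm continuous_const).measurableSet
  have hFm : Measurable (fun z : ℚ_[p] × ℚ_[p] => f (z.1 - z.2)) :=
    (f_measurable s).comp (measurable_fst.sub measurable_snd)
  haveI : IsFiniteMeasure (μ.restrict Z) :=
    ⟨by rw [Measure.restrict_apply_univ, hμ]; exact one_lt_top⟩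
  -- norm symmetry
  have hsym : ∀ x y : ℚ_[p], f (x - y) = f (y - x) := by
    intro x y; simp only [hf, norm_sub_rev]
  -- the inner substitution, lintegral version
  have hsub_lint : ∀ x ∈ Z, ∫⁻ y in Z, ↑‖f (x - y)‖₊ ∂μ = ∫⁻ y in Z, ↑‖f y‖₊ ∂μ := by
    intro x hx
    have h1 : ∀ y : ℚ_[p], (‖f (x - y)‖₊ : ℝ≥0∞) = ‖f (y + (-x))‖₊ := by
      intro y; rw [hsym, sub_eq_add_neg]
    simp_rw [h1]
    have := (measurePreserving_add_right μ (-x)).setLIntegral_comp_preimage_emb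
      (MeasurableEquiv.addRight (-x)).measurableEmbedding
      (fun y => (‖f y‖₊ : ℝ≥0∞)) Z
    rw [preimage_shift hx] at this
    exact this
  -- the inner substitution, Bochner version
  have hsub_int : ∀ x ∈ Z, ∫ y in Z, f (x - y) ∂μ = ∫ y in Z, f y ∂μ := by
    intro x hx
    have h1 : ∀ y : ℚ_[p], f (x - y) = f (y + (-x)) := by
      intro y; rw [hsym, sub_eq_add_neg]
    simp_rw [h1]
    have := (measurePreserving_add_right μ (-x)).setIntegral_preimage_emb
      (MeasurableEquiv.addRight (-x)).measurableEmbedding f Z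
    rw [preimage_shift hx] at this
    exact this
  -- integrability on the product
  have hI : ∫⁻ y in Z, ↑‖f y‖₊ ∂μ < ⊤ := hint.2
  have hIntF : IntegrableOn (fun z : ℚ_[p] × ℚ_[p] => f (z.1 - z.2)) (Z ×ˢ Z) (μ.prod μ) := by
    refine ⟨hFm.aestronglyMeasurable, ?_⟩
    rw [HasFiniteIntegral, ← Measure.prod_restrict]
    rw [lintegral_prod _ (hFm.enorm.aemeasurable)]
    calc ∫⁻ x, ∫⁻ y, ↑‖f (x - y)‖₊ ∂(μ.restrict Z) ∂(μ.restrict Z)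
        = ∫⁻ x in Z, ∫⁻ y in Z, ↑‖f y‖₊ ∂μ ∂μ := by
          refine setLIntegral_congr_fun hZm ?_
          intro x hx
          exact hsub_lint x hx
      _ = (∫⁻ y in Z, ↑‖f y‖₊ ∂μ) * μ Z := setLIntegral_const _ _
      _ < ⊤ := by rw [hμ, mul_one]; exact hI
  rw [setIntegral_prod _ hIntF]
  calc ∫ x in Z, ∫ y in Z, f (x - y) ∂μ ∂μ
      = ∫ x in Z, (∫ y in Z, f y ∂μ) ∂μ := setIntegral_congr_fun hZm (fun x hx => hsub_int x hx)
    _ = (μ Z).toReal • ∫ y in Z, f y ∂μ := setIntegral_const _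
    _ = (1 - (p : ℂ)⁻¹) / (1 - (p : ℂ) ^ (-1 - s)) := by
        rw [hμ, ENNReal.toReal_one, one_smul, hval]
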